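/- Every truncated moment sequence β = {β_i ∈ ℝ : i ∈ ℤ_+^d, |i| ≤ 2n} admits an interpolating measure: there exist points w₁, …, w_ℓ ∈ ℝ^d and nonzero reals α₁, …, α_ℓ such that β_i = Σ_{k=1}^ℓ α_k w_k^i for all |i| ≤ 2n. -/

import Mathlib

open scoped BigOperators RealInnerProductSpace

theorem truncated_moment_sequence_has_interpolating_measure (d n : ℕ)
    (β : (Fin d → ℕ) → ℝ) :
    ∃ (ℓ : ℕ) (α : Fin ℓ → ℝ) (w : Fin ℓ → (Fin d → ℝ)),
      (∀ k, α k ≠ 0) ∧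
      ∀ i : Fin d → ℕ, (∑ j, i j) ≤ 2 * n →
        β i = ∑ k, α k * ∏ j, w k j ^ i j := by
  classical
  -- index type of relevant multi-indices
  let ι := Fin d → Fin (2 * n + 1)
  -- evaluation vectors
  let φ : (Fin d → ℝ) → EuclideanSpace ℝ ι :=
    fun w => WithLp.toLp 2 (fun (i : ι) => ∏ j, w j ^ (i j : ℕ))
  let K : Submodule ℝ (EuclideanSpace ℝ ι) := Submodule.span ℝ (Set.range φ)
  let toF : ι → (Fin d →₀ ℕ) := fun i => Finsupp.equivFunOnFinite.symm fun j => (i j : ℕ)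
  have toF_inj : Function.Injective toF := by
    intro a b hab
    have h := Finsupp.equivFunOnFinite.symm.injective hab
    funext j
    exact Fin.ext (congrFun h j)
  -- the key polynomial argument
  have hker : ∀ c : ι → ℝ,
      (∀ w : Fin d → ℝ, ∑ i : ι, c i * ∏ j, w j ^ (i j : ℕ) = 0) → c = 0 := by
    intro c hc
    set p : MvPolynomial (Fin d) ℝ := ∑ i : ι, MvPolynomial.monomial (toF i) (c i) with hp
    have hpz : p = 0 := by
      apply MvPolynomial.funext
      intro w
      rw [hp, map_sum, map_zero]
      rw [← hc w]
      refine Finset.sum_congr rfl fun i _ => ?_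
      rw [MvPolynomial.eval_monomial]
      congr 1
      rw [Finsupp.prod_fintype _ _ (fun j => pow_zero _)]
      refine Finset.prod_congr rfl fun j _ => ?_
      simp [toF]
    funext i
    have : MvPolynomial.coeff (toF i) p = c i := by
      rw [hp, MvPolynomial.coeff_sum]
      rw [Finset.sum_eq_single i]
      · simp [MvPolynomial.coeff_monomial]
      · intro b _ hb
        rw [MvPolynomial.coeff_monomial, if_neg (fun h => hb (toF_inj h.symm).symm)]
      · simp
    rw [Pi.zero_apply, ← this, hpz, MvPolynomial.coeff_zero]
  -- the span of evaluation vectors is everything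
  have hK : K = ⊤ := by
    rw [← Submodule.orthogonal_eq_bot_iff, eq_bot_iff]
    intro c hc
    rw [Submodule.mem_orthogonal'] at hc
    have hc' : ∀ w : Fin d → ℝ, ∑ i : ι, c i * ∏ j, w j ^ (i j : ℕ) = 0 := by
      intro w
      have := hc (φ w) (Submodule.subset_span ⟨w, rfl⟩)
      rw [PiLp.inner_apply] at this
      simpa [φ, mul_comm] using this
    have := hker c hc'
    simp [Submodule.mem_bot]
    exact (WithLp.ofLp_eq_zero 2).mp this
  -- the target vector lies in the span
  have hb : WithLp.toLp 2 (fun i : ι => β fun j => (i j : ℕ)) ∈ K := hK ▸ Submodule.mem_top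
  rw [Submodule.mem_span_set'] at hb
  obtain ⟨m, f, g, hfg⟩ := hb
  choose wfun hwfun using fun k : Fin m => (g k).2
  -- throw away the zero coefficients
  let T : Finset (Fin m) := Finset.univ.filter fun k => f k ≠ 0
  let e : T ≃ Fin T.card := T.equivFin
  refine ⟨T.card, fun k => f (e.symm k), fun k => wfun (e.symm k), ?_, ?_⟩
  · intro k
    exact (Finset.mem_filter.mp (e.symm k).2).2
  · intro i hi
    have hij : ∀ j, i j < 2 * n + 1 := by
      intro j
      have : i j ≤ ∑ j', i j' := Finset.single_le_sum (fun _ _ => Nat.zero_le _) (Finset.mem_univ j)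
      omega
    set i' : ι := fun j => ⟨i j, hij j⟩ with hi'
    have hβ : β i = ∑ k : Fin m, f k * ∏ j, wfun k j ^ i j := by
      have h1 := congrFun (congrArg WithLp.ofLp hfg) i'
      rw [WithLp.ofLp_sum, Finset.sum_apply, WithLp.ofLp_toLp] at h1
      rw [← h1]
      refine Finset.sum_congr rfl fun k _ => ?_
      rw [← hwfun k]
      simp [φ, i']
    rw [hβ]
    rw [← Finset.sum_filter_of_ne (p := fun k => f k ≠ 0)
      (fun k _ h => fun hf => h (by rw [hf, zero_mul]))]
    rw [← Finset.sum_attach (Finset.univ.filter fun k => f k ≠ 0)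
      (fun k => f k * ∏ j, wfun k j ^ i j)]
    exact Fintype.sum_equiv e.symm _ _ (fun k => rfl) |>.symm
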